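/- Let G be a finite chordal graph with no isolated vertices and let S be an S(G)-set. Then γt(G) = 2γ(G) if and only if S is both a packing and a dominating set of G. -/

import Mathlib

open SimpleGraph

namespace TotalDom

variable {V : Type*}

/-- The closed neighborhood `N[v]` of a vertex. -/
def cnbr (G : SimpleGraph V) (v : V) : Set V := insert v (G.neighborSet v)

/-- `S` is a dominating set: every vertex outside `S` has a neighbor in `S`. -/
def IsDomSet (G : SimpleGraph V) (S : Set V) : Prop := ∀ v ∉ S, ∃ u ∈ S, G.Adj u v

/-- `S` is a total dominating set: every vertex has a neighbor in `S`. -/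
def IsTotalDomSet (G : SimpleGraph V) (S : Set V) : Prop := ∀ v : V, ∃ u ∈ S, G.Adj u v

/-- The domination number `γ(G)`. -/
noncomputable def domNum (G : SimpleGraph V) : ℕ :=
  sInf {n | ∃ S : Set V, IsDomSet G S ∧ S.ncard = n}

/-- The total domination number `γₜ(G)`. -/
noncomputable def totalDomNum (G : SimpleGraph V) : ℕ :=
  sInf {n | ∃ S : Set V, IsTotalDomSet G S ∧ S.ncard = n}

/-- A minimum dominating set (γ-set). -/
def IsMinDomSet (G : SimpleGraph V) (S : Set V) : Prop := IsDomSet G S ∧ S.ncard = domNum G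

/-- `S` is a packing: closed neighborhoods of distinct members are disjoint. -/
def IsPacking (G : SimpleGraph V) (S : Set V) : Prop :=
  S.Pairwise fun u v => Disjoint (cnbr G u) (cnbr G v)

/-- `M(v)`: neighbors of `v` having a neighbor outside `N[v]`. -/
def Mset (G : SimpleGraph V) (v : V) : Set V :=
  {u | G.Adj v u ∧ ∃ w, G.Adj u w ∧ w ∉ cnbr G v}

/-- `D(v)`: neighbors `u` of `v` that are not true twins of `v` with `N[u] ⊆ N[v]`. -/
def Dset (G : SimpleGraph V) (v : V) : Set V :=
  {u | G.Adj v u ∧ cnbr G u ≠ cnbr G v ∧ cnbr G u ⊆ cnbr G v}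

/-- `T(v)`: `v` together with its true twins. -/
def Tset (G : SimpleGraph V) (v : V) : Set V := {u | cnbr G u = cnbr G v}

/-- A non-isolated vertex `v` is special if no `u ∈ M(v)` satisfies `D(v) ⊆ N(u)`. -/
def Special (G : SimpleGraph V) (v : V) : Prop :=
  (G.neighborSet v).Nonempty ∧ ¬ ∃ u ∈ Mset G v, Dset G v ⊆ G.neighborSet u

/-- An `S(G)`-set: a set of special vertices containing exactly one vertex from each
true-twin equivalence class of special vertices. -/
def IsSGSet (G : SimpleGraph V) (S : Set V) : Prop :=
  (∀ u ∈ S, Special G u) ∧ ∀ v, Special G v → ∃! u, u ∈ S ∧ u ∈ Tset G v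

/-- `G` has no isolated vertices. -/
def NoIsolated (G : SimpleGraph V) : Prop := ∀ v : V, ∃ u, G.Adj v u

/-- `G` contains no induced copy of `H`. -/
def Free {α : Type*} (H : SimpleGraph α) (G : SimpleGraph V) : Prop := IsEmpty (H ↪g G)

/-- `H₁`: a 6-cycle plus one chord between vertices at distance two along the cycle. -/
def H1 : SimpleGraph (Fin 6) := cycleGraph 6 ⊔ fromEdgeSet {s(0, 2)}

/-- `H₂`: a 6-cycle `x₁x₂x₃x₄x₅x₆` plus the chords `x₂x₆` and `x₃x₅`. -/
def H2 : SimpleGraph (Fin 6) := cycleGraph 6 ⊔ fromEdgeSet {s(1, 5), s(2, 4)}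

/-- A leaf: a vertex of degree one. -/
def IsLeaf (G : SimpleGraph V) (v : V) : Prop := ∃! u, G.Adj v u

/-- A support vertex: a vertex adjacent to a leaf. -/
def IsSupport (G : SimpleGraph V) (v : V) : Prop := ∃ u, G.Adj v u ∧ IsLeaf G u

/-- `sup(G)`: the set of support vertices. -/
def supSet (G : SimpleGraph V) : Set V := {v | IsSupport G v}

/-! ### Auxiliary lemmas -/

lemma mem_cnbr {G : SimpleGraph V} {u v : V} : u ∈ cnbr G v ↔ u = v ∨ G.Adj v u := by
  simp [cnbr]

lemma self_mem_cnbr {G : SimpleGraph V} (v : V) : v ∈ cnbr G v := Set.mem_insert _ _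

lemma mem_cnbr_comm {G : SimpleGraph V} {u v : V} (h : u ∈ cnbr G v) : v ∈ cnbr G u := by
  rcases mem_cnbr.mp h with rfl | h
  · exact self_mem_cnbr u
  · exact mem_cnbr.mpr (Or.inr h.symm)

lemma ball_cover {G : SimpleGraph V} {D : Set V} (hD : IsDomSet G D) (v : V) :
    ∃ x ∈ D, v ∈ cnbr G x := by
  by_cases hv : v ∈ D
  · exact ⟨v, hv, self_mem_cnbr v⟩
  · obtain ⟨t, ht, hadj⟩ := hD v hv
    exact ⟨t, ht, mem_cnbr.mpr (Or.inr hadj)⟩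

lemma domNum_le {G : SimpleGraph V} {D : Set V} (h : IsDomSet G D) : domNum G ≤ D.ncard :=
  Nat.sInf_le ⟨D, h, rfl⟩

lemma totalDomNum_le {G : SimpleGraph V} {T : Set V} (h : IsTotalDomSet G T) :
    totalDomNum G ≤ T.ncard :=
  Nat.sInf_le ⟨T, h, rfl⟩

lemma exists_minDomSet (G : SimpleGraph V) :
    ∃ D : Set V, IsDomSet G D ∧ D.ncard = domNum G := by
  have hne : {n | ∃ S : Set V, IsDomSet G S ∧ S.ncard = n}.Nonempty :=
    ⟨(Set.univ : Set V).ncard, Set.univ, fun v hv => absurd (Set.mem_univ v) hv, rfl⟩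
  exact Nat.sInf_mem hne

lemma exists_minTotalDomSet {G : SimpleGraph V} (hiso : NoIsolated G) :
    ∃ T : Set V, IsTotalDomSet G T ∧ T.ncard = totalDomNum G := by
  have hne : {n | ∃ S : Set V, IsTotalDomSet G S ∧ S.ncard = n}.Nonempty := by
    refine ⟨(Set.univ : Set V).ncard, Set.univ, fun v => ?_, rfl⟩
    obtain ⟨u, hu⟩ := hiso v
    exact ⟨u, Set.mem_univ u, hu.symm⟩
  exact Nat.sInf_mem hne

lemma lemX (G : SimpleGraph V)
    (h4 : Free (cycleGraph 4) G) (h5 : Free (cycleGraph 5) G) (h6 : Free (cycleGraph 6) G)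
    {d x y z b c : V}
    (hdy : G.Adj d y) (hdz : G.Adj d z) (hyc : G.Adj y c) (hzb : G.Adj z b)
    (hxb : G.Adj x b) (hxc : G.Adj x c)
    (hyb : ¬ G.Adj y b) (hzc : ¬ G.Adj z c) (hdx : ¬ G.Adj d x)
    (hdb : ¬ G.Adj d b) (hdc : ¬ G.Adj d c) (hyx : ¬ G.Adj y x) (hzx : ¬ G.Adj z x) :
    False := by
  have ndy : d ≠ y := hdy.ne
  have ndz : d ≠ z := hdz.ne
  have ndc : d ≠ c := by rintro rfl; exact hdx hxc.symm
  have ndx : d ≠ x := by rintro rfl; exact hyx hdy.symm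
  have ndb : d ≠ b := by rintro rfl; exact hdx hxb.symm
  have nyc : y ≠ c := hyc.ne
  have nyx : y ≠ x := by rintro rfl; exact hdx hdy
  have nyb : y ≠ b := by rintro rfl; exact hdb hdy
  have nyz : y ≠ z := by rintro rfl; exact hzc hyc
  have ncx : c ≠ x := hxc.ne'
  have ncb : c ≠ b := by rintro rfl; exact hyb hyc
  have ncz : c ≠ z := by rintro rfl; exact hzx hxc.symm
  have nxb : x ≠ b := hxb.ne
  have nxz : x ≠ z := by rintro rfl; exact hdx hdz
  have nbz : b ≠ z := hzb.ne'
  by_cases hyz : G.Adj y z <;> by_cases hbc : G.Adj b c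
  · set f : Fin 4 → V := ![y, c, b, z] with hf
    have hinj : Function.Injective f := by
      intro i j hij
      fin_cases i <;> fin_cases j <;>
        first
          | rfl
          | exact absurd hij (by first | assumption | exact (by assumption : _ ≠ _).symm)
    have hrel : ∀ {i j : Fin 4}, G.Adj (f i) (f j) ↔ (cycleGraph 4).Adj i j := by
      intro i j
      fin_cases i <;> fin_cases j <;>
        first
          | exact iff_of_true (by first | assumption | exact (by assumption : G.Adj _ _).symm)
              (by decide)
          | exact iff_of_false (by first
              | assumption
              | exact G.irrefl
              | exact fun h => (by assumption : ¬ G.Adj _ _) h.symm) (by decide)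
    exact IsEmpty.elim h4 ⟨⟨f, hinj⟩, hrel⟩
  · set f : Fin 5 → V := ![y, c, x, b, z] with hf
    have hinj : Function.Injective f := by
      intro i j hij
      fin_cases i <;> fin_cases j <;>
        first
          | rfl
          | exact absurd hij (by first | assumption | exact (by assumption : _ ≠ _).symm)
    have hrel : ∀ {i j : Fin 5}, G.Adj (f i) (f j) ↔ (cycleGraph 5).Adj i j := by
      intro i j
      fin_cases i <;> fin_cases j <;>
        first
          | exact iff_of_true (by first | assumption | exact (by assumption : G.Adj _ _).symm)
              (by decide)
          | exact iff_of_false (by first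
              | assumption
              | exact G.irrefl
              | exact fun h => (by assumption : ¬ G.Adj _ _) h.symm) (by decide)
    exact IsEmpty.elim h5 ⟨⟨f, hinj⟩, hrel⟩
  · set f : Fin 5 → V := ![d, y, c, b, z] with hf
    have hinj : Function.Injective f := by
      intro i j hij
      fin_cases i <;> fin_cases j <;>
        first
          | rfl
          | exact absurd hij (by first | assumption | exact (by assumption : _ ≠ _).symm)
    have hrel : ∀ {i j : Fin 5}, G.Adj (f i) (f j) ↔ (cycleGraph 5).Adj i j := by
      intro i j
      fin_cases i <;> fin_cases j <;>
        first
          | exact iff_of_true (by first | assumption | exact (by assumption : G.Adj _ _).symm)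
              (by decide)
          | exact iff_of_false (by first
              | assumption
              | exact G.irrefl
              | exact fun h => (by assumption : ¬ G.Adj _ _) h.symm) (by decide)
    exact IsEmpty.elim h5 ⟨⟨f, hinj⟩, hrel⟩
  · set f : Fin 6 → V := ![d, y, c, x, b, z] with hf
    have hinj : Function.Injective f := by
      intro i j hij
      fin_cases i <;> fin_cases j <;>
        first
          | rfl
          | exact absurd hij (by first | assumption | exact (by assumption : _ ≠ _).symm)
    have hrel : ∀ {i j : Fin 6}, G.Adj (f i) (f j) ↔ (cycleGraph 6).Adj i j := by
      intro i j
      fin_cases i <;> fin_cases j <;>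
        first
          | exact iff_of_true (by first | assumption | exact (by assumption : G.Adj _ _).symm)
              (by decide)
          | exact iff_of_false (by first
              | assumption
              | exact G.irrefl
              | exact fun h => (by assumption : ¬ G.Adj _ _) h.symm) (by decide)
    exact IsEmpty.elim h6 ⟨⟨f, hinj⟩, hrel⟩

lemma sum_balls [Fintype V] (G : SimpleGraph V) (S' : Finset V) :
    ∀ T : Set V, (∀ a ∈ S', ∀ b ∈ S', a ≠ b → Disjoint (cnbr G a) (cnbr G b)) →
      (∀ v ∈ S', 2 ≤ (T ∩ cnbr G v).ncard) → 2 * S'.card ≤ T.ncard := by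
  classical
  induction S' using Finset.induction_on with
  | empty => intro T _ _; simp
  | @insert a s ha ih =>
    intro T hpw hball
    have h1 : 2 * s.card ≤ (T \ cnbr G a).ncard := by
      apply ih (T \ cnbr G a)
        (fun u hu v hv huv =>
          hpw u (Finset.mem_insert_of_mem hu) v (Finset.mem_insert_of_mem hv) huv)
      intro v hv
      refine le_trans (hball v (Finset.mem_insert_of_mem hv))
        (Set.ncard_le_ncard ?_ (Set.toFinite _))
      rintro q ⟨hqT, hqv⟩
      have hav : a ≠ v := fun h => ha (h ▸ hv)
      exact ⟨⟨hqT, fun hqa =>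
        Set.disjoint_left.mp
          (hpw a (Finset.mem_insert_self _ _) v (Finset.mem_insert_of_mem hv) hav) hqa hqv⟩, hqv⟩
    have h2 := hball a (Finset.mem_insert_self _ _)
    have h3 := Set.ncard_inter_add_ncard_diff_eq_ncard T (cnbr G a) (Set.toFinite _)
    rw [Finset.card_insert_of_notMem ha]
    omega

lemma cover [Fintype V] {G : SimpleGraph V}
    (h4 : Free (cycleGraph 4) G) (h5 : Free (cycleGraph 5) G) (h6 : Free (cycleGraph 6) G)
    (hiso : NoIsolated G) {d x : V} (hdisj : Disjoint (cnbr G d) (cnbr G x)) :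
    ∃ p, G.Adj x p ∧ ∀ y ∈ cnbr G d, (∃ w, G.Adj y w ∧ G.Adj x w) → G.Adj y p := by
  classical
  have hmem : ∀ {t : V}, t ∈ cnbr G d → t ∈ cnbr G x → False :=
    fun h1 h2 => Set.disjoint_left.mp hdisj h1 h2
  have key : ∀ A : Finset V, (∀ y ∈ A, y ∈ cnbr G d ∧ ∃ w, G.Adj y w ∧ G.Adj x w) →
      ∃ p, G.Adj x p ∧ ∀ y ∈ A, G.Adj y p := by
    intro A
    induction A using Finset.induction_on with
    | empty =>
      intro _
      obtain ⟨p, hp⟩ := hiso x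
      exact ⟨p, hp, fun y hy => absurd hy (Finset.notMem_empty y)⟩
    | @insert a s ha ih =>
      intro hA
      obtain ⟨p', hxp', hp'⟩ := ih fun y hy => hA y (Finset.mem_insert_of_mem hy)
      obtain ⟨had, w, haw, hxw⟩ := hA a (Finset.mem_insert_self _ _)
      by_cases hap' : G.Adj a p'
      · refine ⟨p', hxp', fun y hy => ?_⟩
        rcases Finset.mem_insert.mp hy with rfl | hy
        · exact hap'
        · exact hp' y hy
      · by_cases hall : ∀ y ∈ s, G.Adj y w
        · refine ⟨w, hxw, fun y hy => ?_⟩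
          rcases Finset.mem_insert.mp hy with rfl | hy
          · exact haw
          · exact hall y hy
        · push_neg at hall
          obtain ⟨z, hzs, hzw⟩ := hall
          obtain ⟨hzd, wz, hzwz, hxwz⟩ := hA z (Finset.mem_insert_of_mem hzs)
          exfalso
          have hda : G.Adj d a := by
            rcases mem_cnbr.mp had with rfl | h
            · exact (hmem (mem_cnbr.mpr (Or.inr haw)) (mem_cnbr.mpr (Or.inr hxw))).elim
            · exact h
          have hdz : G.Adj d z := by
            rcases mem_cnbr.mp hzd with rfl | h
            · exact (hmem (mem_cnbr.mpr (Or.inr hzwz)) (mem_cnbr.mpr (Or.inr hxwz))).elim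
            · exact h
          have hzp' : G.Adj z p' := hp' z hzs
          have hndx : ¬ G.Adj d x := fun h => hmem (mem_cnbr.mpr (Or.inr h)) (self_mem_cnbr x)
          have hndp' : ¬ G.Adj d p' :=
            fun h => hmem (mem_cnbr.mpr (Or.inr h)) (mem_cnbr.mpr (Or.inr hxp'))
          have hndw : ¬ G.Adj d w :=
            fun h => hmem (mem_cnbr.mpr (Or.inr h)) (mem_cnbr.mpr (Or.inr hxw))
          have hnax : ¬ G.Adj a x := fun h => hmem had (mem_cnbr.mpr (Or.inr h.symm))
          have hnzx : ¬ G.Adj z x := fun h => hmem hzd (mem_cnbr.mpr (Or.inr h.symm))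
          exact lemX G h4 h5 h6 hda hdz haw hzp' hxp' hxw hap' hzw hndx hndp' hndw hnax hnzx
  obtain ⟨p, hp1, hp2⟩ :=
    key ((Set.toFinite {y | y ∈ cnbr G d ∧ ∃ w, G.Adj y w ∧ G.Adj x w}).toFinset)
      (fun y hy => by simpa using hy)
  exact ⟨p, hp1, fun y hy hw => hp2 y (by simpa using And.intro hy hw)⟩

lemma small_total_contra [Fintype V] {G : SimpleGraph V}
    (h2 : totalDomNum G = 2 * domNum G) {D : Set V} (hDc : D.ncard = domNum G)
    {d a : V} (hd : d ∈ D) (p : V → V)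
    (hT : IsTotalDomSet G (insert a ((D \ {d}) ∪ p '' (D \ {d})))) : False := by
  have hc1 : (D \ ({d} : Set V)).ncard = D.ncard - 1 :=
    Set.ncard_diff_singleton_of_mem hd
  have himg : (p '' (D \ {d})).ncard ≤ (D \ ({d} : Set V)).ncard :=
    Set.ncard_image_le (Set.toFinite _)
  have hun : ((D \ ({d} : Set V)) ∪ p '' (D \ {d})).ncard ≤
      (D \ ({d} : Set V)).ncard + (p '' (D \ {d})).ncard := Set.ncard_union_le _ _
  have hins := Set.ncard_insert_le a ((D \ ({d} : Set V)) ∪ p '' (D \ {d}))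
  have hpos : 0 < D.ncard := (Set.ncard_pos (Set.toFinite D)).mpr ⟨d, hd⟩
  have hle := totalDomNum_le hT
  omega

lemma gammaSet_packing [Fintype V] {G : SimpleGraph V} (hiso : NoIsolated G)
    (h2 : totalDomNum G = 2 * domNum G) {D : Set V} (hD : IsDomSet G D)
    (hDc : D.ncard = domNum G) : IsPacking G D := by
  classical
  choose nf hnf using hiso
  intro u hu v hv huv
  by_contra hnd
  obtain ⟨w, hwu, hwv⟩ := Set.not_disjoint_iff.mp hnd
  have hvD : v ∈ D \ ({u} : Set V) := ⟨hv, fun h => huv (Set.mem_singleton_iff.mp h).symm⟩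
  have h2c : (D \ {u} : Set V).ncard = D.ncard - 1 :=
    Set.ncard_diff_singleton_of_mem hu
  have h3c : ((D \ {u}) \ {v} : Set V).ncard = D.ncard - 1 - 1 := by
    rw [Set.ncard_diff_singleton_of_mem hvD, h2c]
  have hpos2 : 2 ≤ D.ncard := by
    have h1 : 0 < (D \ {u} : Set V).ncard := (Set.ncard_pos (Set.toFinite _)).mpr ⟨v, hvD⟩
    omega
  by_cases hadj : G.Adj u v
  · have hT : IsTotalDomSet G (D ∪ nf '' ((D \ {u}) \ {v})) := by
      intro t
      by_cases htD : t ∈ D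
      · by_cases htu : t = u
        · exact ⟨v, Or.inl hv, htu ▸ hadj.symm⟩
        · by_cases htv : t = v
          · exact ⟨u, Or.inl hu, htv ▸ hadj⟩
          · exact ⟨nf t, Or.inr ⟨t, ⟨⟨htD, htu⟩, htv⟩, rfl⟩, (hnf t).symm⟩
      · obtain ⟨q, hq, hqt⟩ := hD t htD
        exact ⟨q, Or.inl hq, hqt⟩
    have hle := totalDomNum_le hT
    have hcard : (D ∪ nf '' ((D \ {u}) \ {v})).ncard ≤ D.ncard + (D.ncard - 1 - 1) := by
      have hu1 := Set.ncard_union_le D (nf '' ((D \ {u}) \ {v}))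
      have hi1 : (nf '' ((D \ {u}) \ {v})).ncard ≤ ((D \ {u}) \ {v} : Set V).ncard :=
        Set.ncard_image_le (Set.toFinite _)
      omega
    omega
  · have hwu' : G.Adj u w := by
      rcases mem_cnbr.mp hwu with rfl | h
      · exfalso
        rcases mem_cnbr.mp hwv with h | h
        · exact huv h
        · exact hadj h.symm
      · exact h
    have hwv' : G.Adj v w := by
      rcases mem_cnbr.mp hwv with rfl | h
      · exact absurd hwu' hadj
      · exact h
    have hT : IsTotalDomSet G (insert w (D ∪ nf '' ((D \ {u}) \ {v}))) := by
      intro t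
      by_cases htD : t ∈ D
      · by_cases htu : t = u
        · exact ⟨w, Set.mem_insert _ _, htu ▸ hwu'.symm⟩
        · by_cases htv : t = v
          · exact ⟨w, Set.mem_insert _ _, htv ▸ hwv'.symm⟩
          · exact ⟨nf t, Or.inr (Or.inr ⟨t, ⟨⟨htD, htu⟩, htv⟩, rfl⟩), (hnf t).symm⟩
      · obtain ⟨q, hq, hqt⟩ := hD t htD
        exact ⟨q, Or.inr (Or.inl hq), hqt⟩
    have hle := totalDomNum_le hT
    have hcard : (insert w (D ∪ nf '' ((D \ {u}) \ {v}))).ncard ≤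
        (D.ncard + (D.ncard - 1 - 1)) + 1 := by
      have hi0 := Set.ncard_insert_le w (D ∪ nf '' ((D \ {u}) \ {v}))
      have hu1 := Set.ncard_union_le D (nf '' ((D \ {u}) \ {v}))
      have hi1 : (nf '' ((D \ {u}) \ {v})).ncard ≤ ((D \ {u}) \ {v} : Set V).ncard :=
        Set.ncard_image_le (Set.toFinite _)
      omega
    omega

lemma totalDomNum_le_two_mul [Fintype V] {G : SimpleGraph V} (hiso : NoIsolated G) :
    totalDomNum G ≤ 2 * domNum G := by
  classical
  obtain ⟨D, hD, hDc⟩ := exists_minDomSet G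
  choose nf hnf using hiso
  have hT : IsTotalDomSet G (D ∪ nf '' D) := by
    intro v
    by_cases hv : v ∈ D
    · exact ⟨nf v, Or.inr ⟨v, hv, rfl⟩, (hnf v).symm⟩
    · obtain ⟨u, hu, hadj⟩ := hD v hv
      exact ⟨u, Or.inl hu, hadj⟩
  have hle := totalDomNum_le hT
  have hu1 := Set.ncard_union_le D (nf '' D)
  have hi1 : (nf '' D).ncard ≤ D.ncard := Set.ncard_image_le (Set.toFinite _)
  omega

lemma claimA [Fintype V] {G : SimpleGraph V} (hiso : NoIsolated G)
    (h4 : Free (cycleGraph 4) G) (h5 : Free (cycleGraph 5) G) (h6 : Free (cycleGraph 6) G)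
    (h2 : totalDomNum G = 2 * domNum G) {D : Set V} (hD : IsDomSet G D)
    (hDc : D.ncard = domNum G) (hpack : IsPacking G D) {d : V} (hd : d ∈ D) :
    Special G d := by
  classical
  obtain ⟨u0, hu0⟩ := hiso d
  refine ⟨⟨u0, hu0⟩, ?_⟩
  rintro ⟨u, ⟨hdu, w0, huw0, hw0⟩, huD⟩
  have hcov : ∀ x ∈ D, x ≠ d →
      ∃ p, G.Adj x p ∧ ∀ y ∈ cnbr G d, (∃ w, G.Adj y w ∧ G.Adj x w) → G.Adj y p := by
    intro x hx hxd
    exact cover h4 h5 h6 hiso (hpack hd hx (fun h => hxd h.symm))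
  choose! p hp1 hp2 using hcov
  have hT : IsTotalDomSet G (insert u ((D \ {d}) ∪ p '' (D \ {d}))) := by
    intro v
    obtain ⟨x, hx, hvx⟩ := ball_cover hD v
    by_cases hxd : x = d
    · subst hxd
      by_cases hu : G.Adj u v
      · exact ⟨u, Set.mem_insert _ _, hu⟩
      · have hout : ∃ w, G.Adj v w ∧ w ∉ cnbr G x := by
          rcases mem_cnbr.mp hvx with rfl | hadj
          · exact absurd hdu.symm hu
          · by_cases hvu : v = u
            · subst hvu
              exact ⟨w0, huw0, hw0⟩
            · by_cases hsub : cnbr G v ⊆ cnbr G x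
              · by_cases heq : cnbr G v = cnbr G x
                · exfalso
                  have humem : u ∈ cnbr G v := by
                    rw [heq]; exact mem_cnbr.mpr (Or.inr hdu)
                  rcases mem_cnbr.mp humem with h | h
                  · exact hvu h.symm
                  · exact hu h.symm
                · exact absurd (huD ⟨hadj, heq, hsub⟩) hu
              · obtain ⟨w, hwv, hwd⟩ := Set.not_subset.mp hsub
                have hwv' : G.Adj v w := by
                  rcases mem_cnbr.mp hwv with rfl | h
                  · exact absurd (mem_cnbr.mpr (Or.inr hadj)) hwd
                  · exact h
                exact ⟨w, hwv', hwd⟩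
        obtain ⟨w, hvw, hwd⟩ := hout
        obtain ⟨x', hx', hwx'⟩ := ball_cover hD w
        have hx'd : x' ≠ x := fun h => hwd (h ▸ hwx')
        rcases mem_cnbr.mp hwx' with rfl | hadjx'
        · exact ⟨w, Or.inr (Or.inl ⟨hx', hx'd⟩), hvw.symm⟩
        · have hadj2 : G.Adj v (p x') := hp2 x' hx' hx'd v hvx ⟨w, hvw, hadjx'⟩
          exact ⟨p x', Or.inr (Or.inr ⟨x', ⟨hx', hx'd⟩, rfl⟩), hadj2.symm⟩
    · rcases mem_cnbr.mp hvx with rfl | hadj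
      · exact ⟨p v, Or.inr (Or.inr ⟨v, ⟨hx, hxd⟩, rfl⟩), (hp1 v hx hxd).symm⟩
      · exact ⟨x, Or.inr (Or.inl ⟨hx, hxd⟩), hadj⟩
  exact small_total_contra h2 hDc hd p hT

lemma claimB [Fintype V] {G : SimpleGraph V} (hiso : NoIsolated G)
    (h2 : totalDomNum G = 2 * domNum G) {D : Set V} (hD : IsDomSet G D)
    (hDc : D.ncard = domNum G) (hpack : IsPacking G D) {s : V} (hs : Special G s) :
    ∃ x ∈ D, cnbr G s = cnbr G x := by
  classical
  obtain ⟨x, hx, hsx⟩ := ball_cover hD s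
  refine ⟨x, hx, ?_⟩
  rcases mem_cnbr.mp hsx with rfl | hadj
  · rfl
  · by_cases hc1 : ∃ w, G.Adj x w ∧ w ∉ cnbr G s
    · exfalso
      obtain ⟨w, hxw, hws⟩ := hc1
      have hnsub : ¬ (Dset G s ⊆ G.neighborSet x) :=
        fun h => hs.2 ⟨x, ⟨hadj.symm, w, hxw, hws⟩, h⟩
      obtain ⟨z, hz, hznx⟩ := Set.not_subset.mp hnsub
      obtain ⟨hsz, hzne, hzsub⟩ := hz
      have hzx : z ∉ cnbr G x := by
        intro hmem
        rcases mem_cnbr.mp hmem with rfl | h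
        · exact hws (hzsub (mem_cnbr.mpr (Or.inr hxw)))
        · exact hznx h
      obtain ⟨x', hx', hzx'⟩ := ball_cover hD z
      have hne : x' ≠ x := fun h => hzx (h ▸ hzx')
      have hx's : x' ∈ cnbr G s := hzsub (mem_cnbr_comm hzx')
      exact Set.disjoint_left.mp (hpack hx' hx hne) (mem_cnbr_comm hx's) hsx
    · push_neg at hc1
      have hsub : cnbr G x ⊆ cnbr G s := by
        intro t ht
        rcases mem_cnbr.mp ht with rfl | h
        · exact mem_cnbr.mpr (Or.inr hadj.symm)
        · exact hc1 t h
      by_contra hne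
      have hex : ∃ w, w ∈ cnbr G s ∧ w ∉ cnbr G x := by
        by_contra h
        push_neg at h
        exact hne (Set.Subset.antisymm (fun t ht => h t ht) hsub)
      obtain ⟨w, hws, hwx⟩ := hex
      have hwne : w ≠ s := fun h => hwx (h ▸ hsx)
      have hsw : G.Adj s w := by
        rcases mem_cnbr.mp hws with h | h
        · exact absurd h hwne
        · exact h
      obtain ⟨xw, hxwD, hwxw⟩ := ball_cover hD w
      have hxwx : xw ≠ x := fun h => hwx (h ▸ hwxw)
      choose nf hnf using hiso
      set p : V → V := fun t => if t = xw ∧ w ≠ xw then w else nf t with hp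
      have hpadj : ∀ t, t ∈ D \ ({x} : Set V) → G.Adj t (p t) := by
        intro t _
        by_cases hcond : t = xw ∧ w ≠ xw
        · have hpt : p t = w := by
            show (if t = xw ∧ w ≠ xw then w else nf t) = w
            rw [if_pos hcond]
          rw [hpt, hcond.1]
          rcases mem_cnbr.mp hwxw with h | h
          · exact absurd h hcond.2
          · exact h
        · have hpt : p t = nf t := by
            show (if t = xw ∧ w ≠ xw then w else nf t) = nf t
            rw [if_neg hcond]
          rw [hpt]
          exact hnf t
      have hT : IsTotalDomSet G (insert s ((D \ {x}) ∪ p '' (D \ {x}))) := by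
        intro v
        obtain ⟨x0, hx0, hvx0⟩ := ball_cover hD v
        by_cases hx0x : x0 = x
        · subst hx0x
          have hvs : v ∈ cnbr G s := hsub hvx0
          by_cases hveq : v = s
          · subst hveq
            by_cases hwxw' : w = xw
            · refine ⟨xw, Or.inr (Or.inl ⟨hxwD, hxwx⟩), ?_⟩
              rw [← hwxw']
              exact hsw.symm
            · refine ⟨p xw, Or.inr (Or.inr ⟨xw, ⟨hxwD, hxwx⟩, rfl⟩), ?_⟩
              have hpxw : p xw = w := by
                show (if xw = xw ∧ w ≠ xw then w else nf xw) = w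
                rw [if_pos ⟨rfl, hwxw'⟩]
              rw [hpxw]
              exact hsw.symm
          · refine ⟨s, Set.mem_insert _ _, ?_⟩
            rcases mem_cnbr.mp hvs with h | h
            · exact absurd h hveq
            · exact h
        · rcases mem_cnbr.mp hvx0 with rfl | h
          · exact ⟨p v, Or.inr (Or.inr ⟨v, ⟨hx0, hx0x⟩, rfl⟩), (hpadj v ⟨hx0, hx0x⟩).symm⟩
          · exact ⟨x0, Or.inr (Or.inl ⟨hx0, hx0x⟩), h⟩
      exact small_total_contra h2 hDc hx p hT

/-- For a chordal graph `G` (no induced cycles of length ≥ 4) with no isolated vertices and an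
`S(G)`-set `S`: `γₜ(G) = 2γ(G)` iff `S` is both a packing and a dominating set of `G`. -/
theorem stmt1 {V : Type*} [Fintype V] (G : SimpleGraph V) (hiso : NoIsolated G)
    (hchordal : ∀ n : ℕ, 4 ≤ n → Free (cycleGraph n) G)
    (S : Set V) (hS : IsSGSet G S) :
    totalDomNum G = 2 * domNum G ↔ IsPacking G S ∧ IsDomSet G S := by
  classical
  have h4 : Free (cycleGraph 4) G := hchordal 4 (by norm_num)
  have h5 : Free (cycleGraph 5) G := hchordal 5 (by norm_num)
  have h6 : Free (cycleGraph 6) G := hchordal 6 (by norm_num)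
  obtain ⟨D, hD, hDc⟩ := exists_minDomSet G
  constructor
  · intro h2
    have hpack := gammaSet_packing hiso h2 hD hDc
    constructor
    · intro s hsS s' hs'S hne
      obtain ⟨x, hx, hsx⟩ := claimB hiso h2 hD hDc hpack (hS.1 s hsS)
      obtain ⟨x', hx', hsx'⟩ := claimB hiso h2 hD hDc hpack (hS.1 s' hs'S)
      have hxx' : x ≠ x' := by
        rintro rfl
        obtain ⟨u, hu, huniq⟩ := hS.2 s (hS.1 s hsS)
        have e1 : s = u := huniq s ⟨hsS, rfl⟩
        have e2 : s' = u := huniq s' ⟨hs'S, hsx'.trans hsx.symm⟩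
        exact hne (e1.trans e2.symm)
      rw [hsx, hsx']
      exact hpack hx hx' hxx'
    · intro v hv
      obtain ⟨x, hx, hvx⟩ := ball_cover hD v
      have hxs := claimA hiso h4 h5 h6 h2 hD hDc hpack hx
      obtain ⟨u, ⟨huS, huT⟩, _⟩ := hS.2 x hxs
      have hvu : v ∈ cnbr G u := by
        rw [show cnbr G u = cnbr G x from huT]
        exact hvx
      rcases mem_cnbr.mp hvu with rfl | h
      · exact absurd huS hv
      · exact ⟨u, huS, h⟩
  · rintro ⟨hPack, hDom⟩
    have hγ2 : S.ncard ≤ domNum G := by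
      rw [← hDc]
      have hch : ∀ s, s ∈ S → ∃ t, t ∈ D ∧ t ∈ cnbr G s := by
        intro s _
        obtain ⟨t, ht, hts⟩ := ball_cover hD s
        exact ⟨t, ht, mem_cnbr_comm hts⟩
      choose! f hf1 hf2 using hch
      refine Set.ncard_le_ncard_of_injOn f (fun a ha => hf1 a ha) ?_ (Set.toFinite D)
      intro a ha b hb hfab
      by_contra hab
      exact Set.disjoint_left.mp (hPack ha hb hab) (hf2 a ha) (hfab ▸ hf2 b hb)
    have hγ : domNum G = S.ncard := le_antisymm (domNum_le hDom) hγ2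
    have hup := totalDomNum_le_two_mul hiso
    have hlow : 2 * S.ncard ≤ totalDomNum G := by
      obtain ⟨T, hT, hTc⟩ := exists_minTotalDomSet hiso
      rw [← hTc]
      have hball : ∀ v ∈ S, 2 ≤ (T ∩ cnbr G v).ncard := by
        intro v hvS
        by_contra hlt
        push_neg at hlt
        obtain ⟨u, huT, huv⟩ := hT v
        have humem : u ∈ T ∩ cnbr G v := ⟨huT, mem_cnbr.mpr (Or.inr huv.symm)⟩
        have hsingle : ∀ q ∈ T ∩ cnbr G v, q = u := by
          intro q hq
          by_contra hqu
          have h2le : 2 ≤ (T ∩ cnbr G v).ncard := by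
            have hsub : ({q, u} : Set V) ⊆ T ∩ cnbr G v := by
              rintro t (rfl | rfl)
              exacts [hq, humem]
            calc 2 = ({q, u} : Set V).ncard := (Set.ncard_pair hqu).symm
              _ ≤ _ := Set.ncard_le_ncard hsub (Set.toFinite _)
          omega
        obtain ⟨t, htT, htu⟩ := hT u
        have htv : t ∉ cnbr G v := by
          intro hmem
          exact htu.ne (hsingle t ⟨htT, hmem⟩)
        have hspec := (hS.1 v hvS).2
        refine hspec ⟨u, ⟨huv.symm, t, htu.symm, htv⟩, ?_⟩
        intro z hz
        obtain ⟨hvz, hzne, hzsub⟩ := hz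
        obtain ⟨q, hqT, hqz⟩ := hT z
        have hqv : q ∈ cnbr G v := hzsub (mem_cnbr.mpr (Or.inr hqz.symm))
        have hq : q = u := hsingle q ⟨hqT, hqv⟩
        exact hq ▸ hqz
      have hfin := Set.toFinite S
      have hsum := sum_balls G hfin.toFinset T
        (fun a ha b hb hab => hPack (hfin.mem_toFinset.mp ha) (hfin.mem_toFinset.mp hb) hab)
        (fun v hv => hball v (hfin.mem_toFinset.mp hv))
      rwa [← Set.ncard_eq_toFinset_card S hfin] at hsum
    omega

end TotalDom
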